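/- With the quantities φⱼ defined from expected perturb-max values as in the self-reducible upper bounds, the sequential rejection sampler (which at step j samples xⱼ with probability exp(φⱼ(x₁,…,xⱼ))/exp(φ_{j-1}(x₁,…,x_{j-1})) and rejects/restarts with the residual probability) accepts with probability Z(θ)/exp(E_γ[max_x {θ(x)+Σᵢ γᵢ(xᵢ)}]), and conditioned on acceptance its output x is distributed exactly according to the Gibbs distribution exp(θ(x))/Z(θ). -/

import Mathlib

set_option maxHeartbeats 1000000

open MeasureTheory Real

/-- Density of the zero-mean Gumbel distribution, whose CDF is `exp (-exp (-(t + c)))`. -/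
noncomputable def gumbelPDF (t : ℝ) : ℝ :=
  Real.exp (-(t + Real.eulerMascheroniConstant)) *
    Real.exp (-Real.exp (-(t + Real.eulerMascheroniConstant)))

/-- The zero-mean Gumbel measure on `ℝ`. -/
noncomputable def gumbel : Measure ℝ :=
  MeasureTheory.volume.withDensity fun t => ENNReal.ofReal (gumbelPDF t)

noncomputable def gumbelCDF (t : ℝ) : ℝ :=
  Real.exp (-Real.exp (-(t + Real.eulerMascheroniConstant)))

lemma hasDerivAt_gumbelCDF (t : ℝ) : HasDerivAt gumbelCDF (gumbelPDF t) t := by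
  unfold gumbelCDF
  set c := Real.eulerMascheroniConstant with hc
  have h1 : HasDerivAt (fun t : ℝ => -(t + c)) (-1) t := by
    exact ((hasDerivAt_id t).add_const c).neg
  have h2 : HasDerivAt (fun t : ℝ => Real.exp (-(t + c))) (Real.exp (-(t + c)) * (-1)) t :=
    (Real.hasDerivAt_exp _).comp t h1
  have h3 : HasDerivAt (fun t : ℝ => -Real.exp (-(t + c))) (Real.exp (-(t + c))) t := by
    have h := h2.neg; rw [mul_neg_one, neg_neg] at h; exact h
  have h4 := (Real.hasDerivAt_exp _).comp t h3
  simpa [gumbelPDF, mul_comm, ← hc, Function.comp_def] using h4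

lemma gumbelPDF_nonneg (t : ℝ) : 0 ≤ gumbelPDF t :=
  le_of_lt (mul_pos (Real.exp_pos _) (Real.exp_pos _))

lemma tendsto_gumbelCDF_atTop : Filter.Tendsto gumbelCDF Filter.atTop (nhds 1) := by
  unfold gumbelCDF
  set c := Real.eulerMascheroniConstant with hc
  have A : Filter.Tendsto (fun t : ℝ => -(t + c)) Filter.atTop Filter.atBot := by
    apply Filter.tendsto_neg_atBot_iff.mpr
    exact Filter.tendsto_atTop_add_const_right _ c Filter.tendsto_id
  have B : Filter.Tendsto (fun t : ℝ => Real.exp (-(t + c))) Filter.atTop (nhds 0) :=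
    Real.tendsto_exp_atBot.comp A
  have C : Filter.Tendsto (fun t : ℝ => -Real.exp (-(t + c))) Filter.atTop (nhds 0) := by
    simpa using B.neg
  have D := (Real.continuous_exp.tendsto 0).comp C
  simpa [Function.comp_def, ← hc] using D

lemma tendsto_gumbelCDF_atBot : Filter.Tendsto gumbelCDF Filter.atBot (nhds 0) := by
  unfold gumbelCDF
  set c := Real.eulerMascheroniConstant with hc
  have A : Filter.Tendsto (fun t : ℝ => -(t + c)) Filter.atBot Filter.atTop := by
    apply Filter.tendsto_neg_atTop_iff.mpr
    exact Filter.tendsto_atBot_add_const_right _ c Filter.tendsto_id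
  have B : Filter.Tendsto (fun t : ℝ => Real.exp (-(t + c))) Filter.atBot Filter.atTop :=
    Real.tendsto_exp_atTop.comp A
  have C : Filter.Tendsto (fun t : ℝ => -Real.exp (-(t + c))) Filter.atBot Filter.atBot :=
    Filter.tendsto_neg_atBot_iff.mpr B
  simpa [Function.comp, ← hc, neg_add, add_comm] using A

lemma continuous_gumbelPDF : Continuous gumbelPDF := by
  unfold gumbelPDF; continuity

lemma gumbelPDF_le (t : ℝ) :
    gumbelPDF t ≤ Real.exp Real.eulerMascheroniConstant * Real.exp t := by
  set c := Real.eulerMascheroniConstant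
  set s := -(t + c) with hs
  have key : s - Real.exp s ≤ -s := by
    have h1 : s / 2 + 1 ≤ Real.exp (s / 2) := Real.add_one_le_exp _
    have h2 : Real.exp (s / 2) * Real.exp (s / 2) = Real.exp s := by
      rw [← Real.exp_add]; ring_nf
    nlinarith [Real.exp_pos (s / 2), sq_nonneg (s / 2 - 1), sq_nonneg (s / 2 + 1)]
  have : gumbelPDF t = Real.exp (s - Real.exp s) := by
    rw [Real.exp_sub]
    simp [gumbelPDF, hs, c, Real.exp_neg, div_eq_mul_inv]
  rw [this, ← Real.exp_add]
  apply Real.exp_le_exp.mpr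
  have : -s = c + t := by rw [hs]; ring
  linarith [key]

lemma integrable_gumbelPDF : Integrable gumbelPDF := by
  rw [← integrableOn_univ, ← Set.Iic_union_Ioi (a := (0:ℝ))]
  apply IntegrableOn.union
  · apply Integrable.mono'
      (g := fun t => Real.exp Real.eulerMascheroniConstant * Real.exp t)
    · exact (integrableOn_exp_Iic 0).const_mul _
    · exact continuous_gumbelPDF.aestronglyMeasurable.restrict
    · filter_upwards with t
      rw [Real.norm_eq_abs, abs_of_nonneg (gumbelPDF_nonneg t)]
      exact gumbelPDF_le t
  · exact integrableOn_Ioi_deriv_of_nonneg'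
      (fun x _ => hasDerivAt_gumbelCDF x)
      (fun x _ => gumbelPDF_nonneg x) tendsto_gumbelCDF_atTop

lemma integral_gumbelPDF : ∫ t : ℝ, gumbelPDF t = 1 := by
  have := MeasureTheory.integral_of_hasDerivAt_of_tendsto
    (f := gumbelCDF) (f' := gumbelPDF)
    hasDerivAt_gumbelCDF integrable_gumbelPDF tendsto_gumbelCDF_atBot tendsto_gumbelCDF_atTop
  simpa using this

instance isProbabilityMeasure_gumbel : IsProbabilityMeasure gumbel := by
  constructor
  rw [gumbel, withDensity_apply _ MeasurableSet.univ, setLIntegral_univ,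
    ← ofReal_integral_eq_lintegral_ofReal integrable_gumbelPDF
      (Filter.Eventually.of_forall gumbelPDF_nonneg),
    integral_gumbelPDF]
  simp

lemma prod_range_div_exp (g : ℕ → ℝ) (n : ℕ) :
    ∏ i ∈ Finset.range n, Real.exp (g (i + 1)) / Real.exp (g i)
      = Real.exp (g n) / Real.exp (g 0) := by
  induction n with
  | zero => simp
  | succ m ih =>
    rw [Finset.prod_range_succ, ih, div_mul_div_comm, mul_comm (Real.exp (g m)),
      mul_div_mul_right _ _ (Real.exp_ne_zero (g m))]

/-- The sequential rejection sampler built from the self-reducible perturb-max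
upper bounds `φ j` outputs a given configuration `x` with probability
`∏_j exp (φ (j+1) x) / exp (φ j x)`; it accepts with probability
`Z(θ) / exp (E_γ max {θ + Σ γ})`, and conditioned on acceptance the output is
distributed according to the Gibbs distribution `exp (θ x) / Z(θ)`. -/
theorem stmt_5 {n : ℕ} {X : Fin n → Type} [∀ i, Fintype (X i)] [∀ i, Nonempty (X i)]
    (θ : (∀ i, X i) → ℝ) (φ : ℕ → (∀ i, X i) → ℝ)
    (hφ : ∀ j : ℕ, ∀ x : ∀ i, X i,
      φ j x = ∫ γ : ∀ i, X i → ℝ,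
          (Finset.univ.sup' Finset.univ_nonempty fun z : ∀ i, X i =>
            θ (fun i => if (i : ℕ) < j then x i else z i) +
              ∑ i ∈ Finset.univ.filter (fun i : Fin n => j ≤ (i : ℕ)), γ i (z i))
        ∂(Measure.pi fun i => Measure.pi fun _ : X i => gumbel))
    (Paccept : ℝ)
    (hP : Paccept = ∑ x : ∀ i, X i,
      ∏ j : Fin n, Real.exp (φ ((j : ℕ) + 1) x) / Real.exp (φ (j : ℕ) x)) :
    (∀ x₀ : ∀ i, X i,
      Paccept = (∑ x : ∀ i, X i, Real.exp (θ x)) /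
        Real.exp (∫ γ : ∀ i, X i → ℝ,
          (Finset.univ.sup' Finset.univ_nonempty fun z : ∀ i, X i =>
            θ z + ∑ i : Fin n, γ i (z i))
          ∂(Measure.pi fun i => Measure.pi fun _ : X i => gumbel))) ∧
    (∀ x : ∀ i, X i,
      (∏ j : Fin n, Real.exp (φ ((j : ℕ) + 1) x) / Real.exp (φ (j : ℕ) x)) / Paccept
        = Real.exp (θ x) / ∑ y : ∀ i, X i, Real.exp (θ y)) := by
  haveI : IsProbabilityMeasure (Measure.pi fun i => Measure.pi fun _ : X i => gumbel) :=
    inferInstance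
  set E : ℝ := ∫ γ : ∀ i, X i → ℝ,
      (Finset.univ.sup' Finset.univ_nonempty fun z : ∀ i, X i =>
        θ z + ∑ i : Fin n, γ i (z i))
      ∂(Measure.pi fun i => Measure.pi fun _ : X i => gumbel) with hEdef
  have hE0 : ∀ x : ∀ i, X i, φ 0 x = E := by
    intro x
    rw [hφ 0 x, hEdef]
    congr 1
    funext γ
    congr 1
    funext z
    simp
  have hEn : ∀ x : ∀ i, X i, φ n x = θ x := by
    intro x
    rw [hφ n x]
    have : (fun γ : ∀ i, X i → ℝ =>
        Finset.univ.sup' Finset.univ_nonempty fun z : ∀ i, X i =>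
          θ (fun i => if (i : ℕ) < n then x i else z i) +
            ∑ i ∈ Finset.univ.filter (fun i : Fin n => n ≤ (i : ℕ)), γ i (z i))
        = fun _ => θ x := by
      funext γ
      have h1 : ∀ z : ∀ i, X i,
          θ (fun i => if (i : ℕ) < n then x i else z i) +
            ∑ i ∈ Finset.univ.filter (fun i : Fin n => n ≤ (i : ℕ)), γ i (z i) = θ x := by
        intro z
        have hf : Finset.univ.filter (fun i : Fin n => n ≤ (i : ℕ)) = ∅ := by
          apply Finset.filter_false_of_mem
          intro i _
          exact Nat.not_le.mpr i.isLt
        rw [hf]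
        simp only [Finset.sum_empty, add_zero]
        congr 1
        funext i
        simp [i.isLt]
      simp only [h1]
      exact Finset.sup'_const _ _
    rw [this]
    simp
  have hprod : ∀ x : ∀ i, X i,
      (∏ j : Fin n, Real.exp (φ ((j : ℕ) + 1) x) / Real.exp (φ (j : ℕ) x))
        = Real.exp (θ x) / Real.exp E := by
    intro x
    rw [Fin.prod_univ_eq_prod_range (fun j => Real.exp (φ (j + 1) x) / Real.exp (φ j x)) n]
    rw [prod_range_div_exp (fun j => φ j x) n, hEn x, hE0 x]
  have hPacc : Paccept = (∑ x : ∀ i, X i, Real.exp (θ x)) / Real.exp E := by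
    rw [hP]
    simp only [hprod]
    rw [Finset.sum_div]
  refine ⟨fun _ => hPacc, fun x => ?_⟩
  rw [hprod x, hPacc]
  have hs : 0 < ∑ y : ∀ i, X i, Real.exp (θ y) :=
    Finset.sum_pos (fun y _ => Real.exp_pos _) Finset.univ_nonempty
  rw [div_div_div_comm, div_self (Real.exp_ne_zero E), div_one]
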